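/- Fix N, h = 1/N, differentiable convex F_i : ℝ² → ℝ, ψ_i as the periodic difference-quotient maps, and G_i(u) = F_i(ψ_i(u)). For u ∈ ℝ^N let L_u* denote the adjoint (transpose) of the Jacobian of G = (G_1,…,G_N) at u. Then for all u, v ∈ ℝ^N and all m ∈ ℝ^N with m_i > 0: Σ_{i=1}^N [ (G_i(v) - G_i(u))·m_i + (L_u* m)_i·(u_i - v_i) ] ≥ 0. -/

import Mathlib

open Set

/-- Gradient inequality for a convex differentiable function on `ℝⁿ`. -/
lemma key_grad_ineq {n : Type*} [Fintype n] [DecidableEq n] {g : (n → ℝ) → ℝ}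
    (hc : ConvexOn ℝ Set.univ g) (hd : Differentiable ℝ g) (u v : n → ℝ) :
    fderiv ℝ g u (v - u) ≤ g v - g u := by
  set φ : ℝ → ℝ := fun t => g (t • (v - u) + u) with hφdef
  have hline : ∀ t : ℝ, HasDerivAt (fun t : ℝ => t • (v - u) + u) (v - u) t := by
    intro t
    simpa using ((hasDerivAt_id t).smul_const (v - u)).add_const u
  have hφ : HasDerivAt φ (fderiv ℝ g u (v - u)) 0 := by
    have h := ((hd ((0:ℝ) • (v - u) + u)).hasFDerivAt.comp_hasDerivAt 0 (hline 0))
    simp only [zero_smul, zero_add] at h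
    exact h
  have hconv : ConvexOn ℝ Set.univ φ := by
    have h := hc.comp_affineMap (AffineMap.lineMap u v)
    rw [Set.preimage_univ] at h
    have heq : (g ∘ (AffineMap.lineMap u v) : ℝ → ℝ) = φ := by
      funext t
      simp [hφdef, AffineMap.lineMap_apply]
    rwa [heq] at h
  have hs := hconv.le_slope_of_hasDerivAt (mem_univ (0:ℝ)) (mem_univ (1:ℝ)) one_pos hφ
  have : slope φ 0 1 = g v - g u := by
    simp [slope_def_field, hφdef]
  linarith [hs, this ▸ hs]

theorem stmt_14 (N : ℕ) [NeZero N] (F : Fin N → ℝ × ℝ → ℝ)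
    (hF : ∀ i, ConvexOn ℝ Set.univ (F i))
    (hFd : ∀ i, Differentiable ℝ (F i))
    (G : Fin N → (Fin N → ℝ) → ℝ)
    (hG : ∀ i u, G i u = F i ((u i - u (i+1)) * N, (u i - u (i-1)) * N))
    (Lstar : (Fin N → ℝ) → (Fin N → ℝ) → Fin N → ℝ)
    (hL : ∀ u m i, Lstar u m i = ∑ j, fderiv ℝ (G j) u (Pi.single i 1) * m j)
    (u v m : Fin N → ℝ) (hm : ∀ i, 0 < m i) :
    0 ≤ ∑ i, ((G i v - G i u) * m i + Lstar u m i * (u i - v i)) := by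
  -- G j as explicit function
  have hGfun : ∀ j, G j = fun w : Fin N → ℝ => F j ((w j - w (j+1)) * N, (w j - w (j-1)) * N) :=
    fun j => funext (hG j)
  -- differentiability of G j
  have hGd : ∀ j, Differentiable ℝ (G j) := by
    intro j
    rw [hGfun j]
    apply (hFd j).comp
    apply Differentiable.prodMk <;> fun_prop
  -- convexity of G j
  have hGc : ∀ j, ConvexOn ℝ Set.univ (G j) := by
    intro j
    let ψ : (Fin N → ℝ) →ₗ[ℝ] ℝ × ℝ :=
      LinearMap.prod
        ((N:ℝ) • ((LinearMap.proj j : (Fin N → ℝ) →ₗ[ℝ] ℝ) - LinearMap.proj (j+1)))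
        ((N:ℝ) • ((LinearMap.proj j : (Fin N → ℝ) →ₗ[ℝ] ℝ) - LinearMap.proj (j-1)))
    have h := (hF j).comp_affineMap ψ.toAffineMap
    rw [Set.preimage_univ] at h
    have heq : (F j ∘ ψ.toAffineMap : (Fin N → ℝ) → ℝ) = G j := by
      funext w
      simp [hG, ψ, LinearMap.prod_apply, mul_comm]
    rwa [heq] at h
  -- the fderiv of G j applied to u - v expands as the sum over coordinates
  have hexp : ∀ j, (fderiv ℝ (G j) u) (u - v)
      = ∑ i, (u i - v i) * fderiv ℝ (G j) u (Pi.single i 1) := by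
    intro j
    have hud : (u - v : Fin N → ℝ) = ∑ i, (u i - v i) • (Pi.single i 1 : Fin N → ℝ) := by
      funext k
      simp [Finset.sum_apply, Pi.single_apply]
    rw [hud, map_sum]
    refine Finset.sum_congr rfl fun i _ => ?_
    rw [(fderiv ℝ (G j) u).map_smul]
    simp [smul_eq_mul]
  -- rearrange the sum
  have hsum : ∑ i, ((G i v - G i u) * m i + Lstar u m i * (u i - v i))
      = ∑ j, m j * ((G j v - G j u) - fderiv ℝ (G j) u (v - u)) := by
    have h1 : ∑ i, Lstar u m i * (u i - v i)
        = ∑ j, m j * (fderiv ℝ (G j) u) (u - v) := by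
      simp_rw [hL, Finset.sum_mul, hexp]
      rw [Finset.sum_comm]
      refine Finset.sum_congr rfl fun j _ => ?_
      rw [Finset.mul_sum]
      refine Finset.sum_congr rfl fun i _ => by ring
    rw [Finset.sum_add_distrib, h1, ← Finset.sum_add_distrib]
    refine Finset.sum_congr rfl fun j _ => ?_
    have : (fderiv ℝ (G j) u) (v - u) = -(fderiv ℝ (G j) u) (u - v) := by
      rw [← map_neg]; congr 1; abel
    rw [this]; ring
  rw [hsum]
  apply Finset.sum_nonneg
  intro j _
  have hkey := key_grad_ineq (hGc j) (hGd j) u v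
  have := (hm j).le
  nlinarith [hkey, hm j]
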